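/- Writing s_k for the adjacent transposition (k, k+1) in the symmetric group S_n, the product (s_q s_{q−1} ⋯ s_2 s_1)(s_{2q} s_{2q−1} ⋯ s_2) ⋯ (s_{rq} s_{rq−1} ⋯ s_r), where the j-th block is s_{jq} s_{jq−1} ⋯ s_j, equals the permutation w = w_{r,n}; moreover the total number r + (q−1)·r(r+1)/2 of letters in this word equals the number of inversions of w, so this expression is reduced. -/

import Mathlib

private def blockFun (a m x : ℕ) : ℕ :=
  if x = a then a + m else if a < x ∧ x ≤ a + m then x - 1 else x

private lemma block_eval (a m : ℕ) : ∀ x,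
    (((List.range' a m).reverse.map (fun k => Equiv.swap k (k + 1))).prod : Equiv.Perm ℕ) x
      = blockFun a m x := by
  induction m with
  | zero =>
    intro x
    simp only [List.range', List.reverse_nil, List.map_nil, List.prod_nil, Equiv.Perm.coe_one,
      id_eq, blockFun]
    split_ifs <;> omega
  | succ m ih =>
    intro x
    rw [List.range'_concat]
    simp only [List.reverse_append, List.reverse_singleton, List.singleton_append,
      List.map_cons, List.prod_cons, Equiv.Perm.mul_apply, ih, blockFun, Equiv.swap_apply_def,
      one_mul]
    split_ifs <;> omega

private def wordP (q r : ℕ) : Equiv.Perm ℕ :=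
  (((List.range' 1 r).flatMap fun j => (List.range' j (j * q - j + 1)).reverse).map
      (fun k => Equiv.swap k (k + 1))).prod

private lemma wordP_succ (q r : ℕ) :
    wordP q (r + 1) = wordP q r *
      ((List.range' (r + 1) ((r + 1) * q - (r + 1) + 1)).reverse.map
        (fun k => Equiv.swap k (k + 1))).prod := by
  unfold wordP
  rw [List.range'_concat]
  simp [List.flatMap_append, Nat.add_comm 1 r]

private lemma wordP_props (q : ℕ) (hq : 1 ≤ q) (r : ℕ) :
    (∀ x, x = 0 ∨ r * q + 1 < x → wordP q r x = x)
    ∧ (∀ j, 1 ≤ j → j ≤ r → wordP q r j = j * q + 1)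
    ∧ (∀ x, r < x → wordP q r x ≤ x)
    ∧ (∀ a b, r < a → a < b → wordP q r a < wordP q r b) := by
  induction r with
  | zero =>
    refine ⟨fun x _ => ?_, fun j h1 h2 => by omega, fun x _ => ?_, fun a b _ hab => ?_⟩ <;>
      simp [wordP] <;> omega
  | succ r ih =>
    obtain ⟨A, B, C, D⟩ := ih
    set m := (r + 1) * q - (r + 1) + 1 with hm_def
    have key : ∀ x, wordP q (r + 1) x = wordP q r (blockFun (r + 1) m x) := by
      intro x
      rw [wordP_succ, Equiv.Perm.mul_apply, block_eval]
    have h1 : r + 1 ≤ (r + 1) * q := Nat.le_mul_of_pos_right _ hq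
    have hm : (r + 1) + m = (r + 1) * q + 1 := by omega
    have h2 : r * q + q = (r + 1) * q := by ring
    have A' : ∀ x, x = 0 ∨ (r + 1) * q + 1 < x → wordP q (r + 1) x = x := by
      intro x hx
      have hbf : blockFun (r + 1) m x = x := by unfold blockFun; split_ifs <;> omega
      rw [key, hbf]
      exact A x (by omega)
    refine ⟨A', ?_, ?_, ?_⟩
    · intro j hj1 hj2
      rcases Nat.lt_or_ge j (r + 1) with h | h
      · have hbf : blockFun (r + 1) m j = j := by unfold blockFun; split_ifs <;> omega
        rw [key, hbf]; exact B j hj1 (by omega)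
      · have hj : j = r + 1 := by omega
        subst hj
        have hbf : blockFun (r + 1) m (r + 1) = (r + 1) * q + 1 := by
          unfold blockFun; split_ifs <;> omega
        rw [key, hbf]
        exact A _ (by omega)
    · intro x hx
      rcases le_or_gt x ((r + 1) * q + 1) with h | h
      · have hbf : blockFun (r + 1) m x = x - 1 := by unfold blockFun; split_ifs <;> omega
        rw [key, hbf]
        have := C (x - 1) (by omega)
        omega
      · have := A' x (by omega)
        omega
    · intro a b ha hab
      by_cases hb : b ≤ (r + 1) * q + 1
      · have hbfa : blockFun (r + 1) m a = a - 1 := by unfold blockFun; split_ifs <;> omega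
        have hbfb : blockFun (r + 1) m b = b - 1 := by unfold blockFun; split_ifs <;> omega
        rw [key, key, hbfa, hbfb]
        exact D (a - 1) (b - 1) (by omega) (by omega)
      · by_cases hA : a ≤ (r + 1) * q + 1
        · have hbfa : blockFun (r + 1) m a = a - 1 := by unfold blockFun; split_ifs <;> omega
          rw [key a, hbfa, key b]
          have hbfb : blockFun (r + 1) m b = b := by unfold blockFun; split_ifs <;> omega
          rw [hbfb, A b (by omega)]
          have := C (a - 1) (by omega)
          omega
        · rw [A' a (by omega), A' b (by omega)]
          exact hab

private lemma sum_formula (t : ℕ) : ∀ r : ℕ,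
    ∑ i ∈ Finset.Icc 1 r, (i * t + 1) = r + t * (r * (r + 1)) / 2 := by
  intro r
  induction r with
  | zero => simp
  | succ r ih =>
    rw [Finset.sum_Icc_succ_top (by omega), ih]
    have h : t * ((r + 1) * (r + 1 + 1)) = t * (r * (r + 1)) + (t * (r + 1)) * 2 := by ring
    rw [h, Nat.add_mul_div_right _ _ (by omega : (0:ℕ) < 2)]
    have h2 : (r + 1) * t = t * (r + 1) := Nat.mul_comm _ _
    omega

private lemma word_length (q : ℕ) : ∀ r : ℕ,
    ((List.range' 1 r).flatMap fun j => (List.range' j (j * q - j + 1)).reverse).length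
      = ∑ i ∈ Finset.Icc 1 r, (i * (q - 1) + 1) := by
  intro r
  induction r with
  | zero => simp
  | succ r ih =>
    rw [List.range'_concat, List.flatMap_append, List.length_append, ih,
      Finset.sum_Icc_succ_top (by omega)]
    have h : (r + 1) * (q - 1) = (r + 1) * q - (r + 1) := by
      rw [← Nat.pred_eq_sub_one, Nat.mul_pred]
    simp [Nat.add_comm 1 r, h]

/-- Writing `s_k` for the adjacent transposition `(k, k+1)`, the product
`(s_q ⋯ s_1)(s_{2q} ⋯ s_2) ⋯ (s_{rq} ⋯ s_r)` (the `j`-th block being `s_{jq} s_{jq−1} ⋯ s_j`)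
equals the permutation `w = w_{r,n}`; moreover the total number `r + (q−1)·r(r+1)/2` of
letters in this word equals the number of inversions of `w`, so the expression is reduced.
Here `n = rq+1`, `r ≥ 1`, `q ≥ 2`, and `w` is as in the context (one-line notation
`(q+1, …, rq+1)` followed by the remaining values in increasing order). -/
theorem stmt_3 (r q : ℕ) (hr : 1 ≤ r) (hq : 2 ≤ q) (n : ℕ) (hn : n = r * q + 1)
    (w : Equiv.Perm ℕ)
    (hfix : ∀ k, k ∉ Finset.Icc 1 n → w k = k)
    (hw : ∀ j, 1 ≤ j → j ≤ r → w j = j * q + 1)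
    (hmono : ∀ a b, r + 1 ≤ a → a < b → b ≤ n → w a < w b) :
    (((List.range' 1 r).flatMap fun j => (List.range' j (j * q - j + 1)).reverse).map
        (fun k => Equiv.swap k (k + 1))).prod = w
    ∧ ((List.range' 1 r).flatMap fun j => (List.range' j (j * q - j + 1)).reverse).length
        = r + (q - 1) * (r * (r + 1)) / 2
    ∧ r + (q - 1) * (r * (r + 1)) / 2
        = ((Finset.Icc 1 n ×ˢ Finset.Icc 1 n).filter
            (fun p => p.1 < p.2 ∧ w.symm p.2 < w.symm p.1)).card := by
  have hq1 : 1 ≤ q := by omega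
  obtain ⟨A, B, C, D⟩ := wordP_props q hq1 r
  set P := wordP q r with hPdef
  -- P and w map Icc 1 n into itself
  have hPmaps : ∀ x ∈ Finset.Icc 1 n, P x ∈ Finset.Icc 1 n := by
    intro x hx
    rw [Finset.mem_Icc] at hx ⊢
    rcases le_or_gt x r with h | h
    · rw [B x hx.1 h]
      have : x * q ≤ r * q := Nat.mul_le_mul_right q h
      omega
    · have h1 := C x h
      have h2 : P x ≠ 0 := by
        intro h0
        have := P.injective (h0.trans (A 0 (Or.inl rfl)).symm)
        omega
      omega
  have hwmaps : ∀ x ∈ Finset.Icc 1 n, w x ∈ Finset.Icc 1 n := by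
    intro x hx
    by_contra hc
    have h2 := hfix (w x) hc
    have h3 : w x = x := w.injective h2
    rw [h3] at hc; exact hc hx
  -- common image lemma
  have himg : ∀ f : Equiv.Perm ℕ, (∀ x ∈ Finset.Icc 1 n, f x ∈ Finset.Icc 1 n) →
      (∀ j, 1 ≤ j → j ≤ r → f j = j * q + 1) →
      (Finset.Icc (r + 1) n).image f
        = Finset.Icc 1 n \ (Finset.Icc 1 r).image (fun j => j * q + 1) := by
    intro f hmaps hvals
    have hsub : (Finset.Icc 1 n).image f ⊆ Finset.Icc 1 n := by
      intro y hy
      obtain ⟨x, hx, rfl⟩ := Finset.mem_image.mp hy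
      exact hmaps x hx
    have hfull : (Finset.Icc 1 n).image f = Finset.Icc 1 n :=
      Finset.eq_of_subset_of_card_le hsub
        (le_of_eq (Finset.card_image_of_injective _ f.injective).symm)
    ext y
    simp only [Finset.mem_image, Finset.mem_sdiff, Finset.mem_Icc]
    constructor
    · rintro ⟨x, hx, rfl⟩
      have hx' : 1 ≤ x ∧ x ≤ n := ⟨by omega, hx.2⟩
      have hmem := hmaps x (Finset.mem_Icc.mpr hx')
      rw [Finset.mem_Icc] at hmem
      refine ⟨hmem, ?_⟩
      rintro ⟨j, hj, hje⟩
      have hfe : f j = f x := by rw [hvals j hj.1 hj.2, hje]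
      have := f.injective hfe
      omega
    · rintro ⟨⟨hy1, hy2⟩, hnot⟩
      have hy : y ∈ (Finset.Icc 1 n).image f := by
        rw [hfull]; exact Finset.mem_Icc.mpr ⟨hy1, hy2⟩
      obtain ⟨x, hx, rfl⟩ := Finset.mem_image.mp hy
      rw [Finset.mem_Icc] at hx
      refine ⟨x, ⟨?_, hx.2⟩, rfl⟩
      by_contra hxr
      push_neg at hxr
      exact hnot ⟨x, ⟨hx.1, by omega⟩, (hvals x hx.1 (by omega)).symm⟩
  -- pointwise equality of P and w
  have hweq : ∀ x, P x = w x := by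
    intro x
    rcases le_or_gt x r with hxr | hxr
    · rcases Nat.eq_zero_or_pos x with h0 | h0
      · subst h0
        rw [A 0 (Or.inl rfl), hfix 0 (by simp)]
      · rw [B x h0 hxr, hw x h0 hxr]
    · rcases le_or_gt x n with hxn | hxn
      · -- the order-embedding argument on Icc (r+1) n
        set S := Finset.Icc (r + 1) n with hSdef
        have himgw := himg w hwmaps hw
        have himgP := himg P hPmaps (fun j a b => B j a b)
        have himgeq : S.image ⇑w = S.image ⇑P := himgw.trans himgP.symm
        have hcard : (S.image ⇑w).card = S.card := Finset.card_image_of_injective _ w.injective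
        have hwm : StrictMono (fun i : Fin S.card => w (S.orderEmbOfFin rfl i)) := by
          intro i j hij
          have m1 := Finset.mem_Icc.mp (Finset.orderEmbOfFin_mem S rfl i)
          have m2 := Finset.mem_Icc.mp (Finset.orderEmbOfFin_mem S rfl j)
          exact hmono _ _ m1.1 ((S.orderEmbOfFin rfl).strictMono hij) m2.2
        have hPm : StrictMono (fun i : Fin S.card => P (S.orderEmbOfFin rfl i)) := by
          intro i j hij
          have m1 := Finset.mem_Icc.mp (Finset.orderEmbOfFin_mem S rfl i)
          exact D _ _ (by omega) ((S.orderEmbOfFin rfl).strictMono hij)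
        have hfw : OrderEmbedding.ofStrictMono _ hwm = (S.image ⇑w).orderEmbOfFin hcard :=
          Finset.orderEmbOfFin_unique' _
            (fun i => Finset.mem_image_of_mem _ (Finset.orderEmbOfFin_mem S rfl i))
        have hfP : OrderEmbedding.ofStrictMono _ hPm = (S.image ⇑w).orderEmbOfFin hcard :=
          Finset.orderEmbOfFin_unique' _
            (fun i => by
              rw [himgeq]
              exact Finset.mem_image_of_mem _ (Finset.orderEmbOfFin_mem S rfl i))
        have heq := hfw.trans hfP.symm
        have hxS : x ∈ S := Finset.mem_Icc.mpr (by omega)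
        have hxr' : x ∈ Set.range ⇑(S.orderEmbOfFin rfl) := by
          rw [Finset.range_orderEmbOfFin]; exact hxS
        obtain ⟨i, rfl⟩ := hxr'
        have := congrArg (fun f : Fin S.card ↪o ℕ => f i) heq
        simpa using this.symm
      · rw [A x (by omega), hfix x (by rw [Finset.mem_Icc]; omega)]
  have hProd : P = w := Equiv.ext hweq
  -- symm facts for inversion counting
  have hsymmval : ∀ j, 1 ≤ j → j ≤ r → w.symm (j * q + 1) = j := by
    intro j h1 h2
    rw [Equiv.symm_apply_eq]
    exact (hw j h1 h2).symm
  have hsymmmaps : ∀ x ∈ Finset.Icc 1 n, w.symm x ∈ Finset.Icc 1 n := by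
    intro x hx
    by_contra hc
    have h2 := hfix _ hc
    rw [Equiv.apply_symm_apply] at h2
    rw [← h2] at hc
    exact hc hx
  have hsymmlarge : ∀ x ∈ Finset.Icc 1 n, w.symm x ≤ r → x = w.symm x * q + 1 := by
    intro x hx hle
    have h1 : 1 ≤ w.symm x := (Finset.mem_Icc.mp (hsymmmaps x hx)).1
    have h2 := hw (w.symm x) h1 hle
    rw [Equiv.apply_symm_apply] at h2
    exact h2
  set T := (Finset.Icc 1 r).image (fun j => j * q + 1) with hTdef
  have hInv :
      ((Finset.Icc 1 n ×ˢ Finset.Icc 1 n).filter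
          (fun p => p.1 < p.2 ∧ w.symm p.2 < w.symm p.1))
        = (Finset.Icc 1 r).biUnion (fun i =>
            (Finset.Icc 1 (i * q) \ T).image (fun p1 => (p1, i * q + 1))) := by
    ext p
    simp only [hTdef, Finset.mem_filter, Finset.mem_product, Finset.mem_biUnion,
      Finset.mem_image, Finset.mem_sdiff, Finset.mem_Icc]
    constructor
    · rintro ⟨⟨⟨h11, h12⟩, h21, h22⟩, hlt, hinv⟩
      have ha := hsymmmaps p.2 (Finset.mem_Icc.mpr ⟨h21, h22⟩)
      have hb := hsymmmaps p.1 (Finset.mem_Icc.mpr ⟨h11, h12⟩)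
      rw [Finset.mem_Icc] at ha hb
      have har : w.symm p.2 ≤ r := by
        by_contra hc
        push_neg at hc
        have := hmono _ _ hc hinv hb.2
        rw [Equiv.apply_symm_apply, Equiv.apply_symm_apply] at this
        omega
      have hp2 : p.2 = w.symm p.2 * q + 1 := hsymmlarge p.2 (Finset.mem_Icc.mpr ⟨h21, h22⟩) har
      have hbr : r < w.symm p.1 := by
        by_contra hc
        push_neg at hc
        have hp1 : p.1 = w.symm p.1 * q + 1 := hsymmlarge p.1 (Finset.mem_Icc.mpr ⟨h11, h12⟩) hc
        have hmul : w.symm p.2 * q < w.symm p.1 * q := (Nat.mul_lt_mul_right (by omega : 0 < q)).mpr hinv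
        omega
      refine ⟨w.symm p.2, ⟨ha.1, har⟩, p.1, ⟨⟨h11, by omega⟩, ?_⟩, ?_⟩
      · rintro ⟨j, hj, hje⟩
        have hj2 : w.symm p.1 = j := by rw [← hje, hsymmval j hj.1 hj.2]
        omega
      · rw [← hp2]
    · rintro ⟨i, ⟨hi1, hir⟩, p1, ⟨⟨hp1, hp1le⟩, hnot⟩, rfl⟩
      have hiq : i * q ≤ r * q := Nat.mul_le_mul_right q hir
      have hs2 : w.symm (i * q + 1) = i := hsymmval i hi1 hir
      have hbmem : w.symm p1 ∈ Finset.Icc 1 n :=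
        hsymmmaps p1 (Finset.mem_Icc.mpr ⟨hp1, by omega⟩)
      rw [Finset.mem_Icc] at hbmem
      have hbr : r < w.symm p1 := by
        by_contra hc
        push_neg at hc
        exact hnot ⟨w.symm p1, ⟨hbmem.1, hc⟩,
          (hsymmlarge p1 (Finset.mem_Icc.mpr ⟨hp1, by omega⟩) hc).symm⟩
      refine ⟨⟨⟨hp1, by omega⟩, by omega, by omega⟩, by omega, ?_⟩
      show w.symm (i * q + 1) < w.symm p1
      omega
  refine ⟨hProd, ?_, ?_⟩
  · rw [word_length q r]
    exact sum_formula (q - 1) r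
  · rw [hInv, Finset.card_biUnion ?hdisj]
    case hdisj =>
      intro i hi j hj hij
      rw [Function.onFun, Finset.disjoint_left]
      rintro p hp1 hp2
      obtain ⟨a, _, rfl⟩ := Finset.mem_image.mp hp1
      obtain ⟨b, _, hbe⟩ := Finset.mem_image.mp hp2
      have hsnd : j * q + 1 = i * q + 1 := congrArg Prod.snd hbe
      have : j * q = i * q := by omega
      exact hij (Nat.eq_of_mul_eq_mul_right (by omega) this).symm
    have hcardB : ∀ i ∈ Finset.Icc 1 r,
        ((Finset.Icc 1 (i * q) \ T).image (fun p1 => (p1, i * q + 1))).card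
          = i * (q - 1) + 1 := by
      intro i hi
      rw [Finset.mem_Icc] at hi
      rw [Finset.card_image_of_injective _ (fun a b h => congrArg Prod.fst h)]
      have hint : Finset.Icc 1 (i * q) ∩ T = (Finset.Icc 1 (i - 1)).image (fun j => j * q + 1) := by
        ext y
        simp only [hTdef, Finset.mem_inter, Finset.mem_Icc, Finset.mem_image]
        constructor
        · rintro ⟨⟨hy1, hyle⟩, j, ⟨hj1, hjr⟩, rfl⟩
          refine ⟨j, ⟨hj1, ?_⟩, rfl⟩
          have hlt : j * q < i * q := by omega
          have := Nat.lt_of_mul_lt_mul_right hlt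
          omega
        · rintro ⟨j, ⟨hj1, hji⟩, rfl⟩
          have hji' : j + 1 ≤ i := by omega
          have hle : (j + 1) * q ≤ i * q := Nat.mul_le_mul_right q hji'
          have hq' : j * q + q = (j + 1) * q := by ring
          exact ⟨⟨by omega, by omega⟩, j, ⟨hj1, by omega⟩, rfl⟩
      have hinj2 : Function.Injective (fun j : ℕ => j * q + 1) := by
        intro a b h
        have h' : a * q + 1 = b * q + 1 := h
        have h2 : a * q = b * q := by omega
        exact Nat.eq_of_mul_eq_mul_right (by omega) h2
      have hTcard : ((Finset.Icc 1 (i - 1)).image (fun j => j * q + 1)).card = i - 1 := by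
        rw [Finset.card_image_of_injective _ hinj2, Nat.card_Icc]
        omega
      have hcsi := Finset.card_sdiff_add_card_inter (Finset.Icc 1 (i * q)) T
      rw [hint, hTcard, Nat.card_Icc] at hcsi
      have hle : i ≤ i * q := Nat.le_mul_of_pos_right _ (by omega)
      have hmp : i * (q - 1) = i * q - i := by rw [← Nat.pred_eq_sub_one, Nat.mul_pred]
      omega
    rw [Finset.sum_congr rfl hcardB]
    exact (sum_formula (q - 1) r).symm
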